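/- Let p > 2, s ∈ [1, p-1), and Γ > 0. Then there exists N ∈ ℕ such that Σ_{k=1}^N (1/(2k·2^k))·2^{k(p-s)} > Γ·((Σ_{k=1}^N 1/k)/(2 - Σ_{k=1}^N 1/(k·2^k)))^p·(1 - Σ_{k=1}^N 1/(2k·2^k))^s. -/

import Mathlib

open Finset Filter Real

lemma geom_aux : ∀ N : ℕ, ∑ k ∈ Icc 1 N, ((1:ℝ)/2)^k = 1 - (1/2)^N := by
  intro N
  induction N with
  | zero => simp
  | succ n ih =>
      rw [Finset.sum_Icc_succ_top (by omega), ih]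
      ring

theorem stmt7 (p s Γ : ℝ) (hp : 2 < p) (hs1 : 1 ≤ s) (hs2 : s < p - 1) (hΓ : 0 < Γ) :
    ∃ N : ℕ, 1 ≤ N ∧
      (∑ k ∈ Finset.Icc 1 N, (1 / (2 * (k : ℝ) * 2 ^ k)) * (2 : ℝ) ^ ((k : ℝ) * (p - s)))
        > Γ * ((∑ k ∈ Finset.Icc 1 N, (1 : ℝ) / k) /
            (2 - ∑ k ∈ Finset.Icc 1 N, (1 : ℝ) / (k * 2 ^ k))) ^ p *
          (1 - ∑ k ∈ Finset.Icc 1 N, (1 : ℝ) / (2 * k * 2 ^ k)) ^ s := by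
  set ε : ℝ := p - s - 1 with hεdef
  have hε : 0 < ε := by simp [hεdef]; linarith
  set c : ℝ := ε * Real.log 2 with hcdef
  have hc : 0 < c := mul_pos hε (Real.log_pos (by norm_num))
  -- find N with 2^(Nε) > 2Γ N^(p+1)
  have h1 : Tendsto (fun x : ℝ => Real.exp x / x ^ (p+1)) atTop atTop :=
    tendsto_exp_div_rpow_atTop (p+1)
  have h2 : Tendsto (fun n : ℕ => (n : ℝ) * c) atTop atTop :=
    tendsto_natCast_atTop_atTop.atTop_mul_const hc
  have h3 := (h1.comp h2).atTop_mul_const (Real.rpow_pos_of_pos hc (p+1))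
  have h4 : ∀ᶠ n : ℕ in atTop,
      Real.exp ((n:ℝ) * c) / ((n:ℝ) * c) ^ (p+1) * c ^ (p+1) > 2 * Γ :=
    h3.eventually_gt_atTop (2 * Γ)
  obtain ⟨N, hNkey, hN1⟩ := (h4.and (eventually_ge_atTop 1)).exists
  refine ⟨N, hN1, ?_⟩
  have hN0 : (0:ℝ) < (N:ℝ) := by exact_mod_cast hN1
  -- rewrite key inequality
  have hexp : Real.exp ((N:ℝ) * c) = (2:ℝ) ^ ((N:ℝ) * ε) := by
    rw [Real.rpow_def_of_pos (by norm_num : (0:ℝ) < 2)]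
    rw [hcdef]; ring_nf
  have hmul : ((N:ℝ) * c) ^ (p+1) = (N:ℝ) ^ (p+1) * c ^ (p+1) :=
    Real.mul_rpow hN0.le hc.le
  have hkey2 : (2:ℝ) ^ ((N:ℝ) * ε) > 2 * Γ * (N:ℝ) ^ (p+1) := by
    have hcp : (0:ℝ) < c ^ (p+1) := Real.rpow_pos_of_pos hc (p+1)
    have hNp : (0:ℝ) < (N:ℝ) ^ (p+1) := Real.rpow_pos_of_pos hN0 (p+1)
    rw [hexp, hmul] at hNkey
    have : Real.exp ((N:ℝ) * c) / ((N:ℝ) * c) ^ (p+1) * c ^ (p+1)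
        = (2:ℝ) ^ ((N:ℝ) * ε) / (N:ℝ) ^ (p+1) := by
      rw [hexp, hmul]; field_simp
    rw [hexp, hmul] at this
    rw [this] at hNkey
    calc 2 * Γ * (N:ℝ) ^ (p+1) < (2:ℝ) ^ ((N:ℝ) * ε) / (N:ℝ) ^ (p+1) * (N:ℝ) ^ (p+1) := by
          exact mul_lt_mul_of_pos_right hNkey hNp
      _ = (2:ℝ) ^ ((N:ℝ) * ε) := by field_simp
  -- bounds on the sums
  have hNmem : N ∈ Icc 1 N := by simp [hN1]
  have hH0 : (0:ℝ) ≤ ∑ k ∈ Icc 1 N, (1:ℝ)/k := by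
    apply Finset.sum_nonneg; intro k _; positivity
  have hHN : (∑ k ∈ Icc 1 N, (1:ℝ)/k) ≤ (N:ℝ) := by
    calc (∑ k ∈ Icc 1 N, (1:ℝ)/k) ≤ ∑ k ∈ Icc 1 N, (1:ℝ) := by
          apply Finset.sum_le_sum; intro k hk
          rw [Finset.mem_Icc] at hk
          have : (1:ℝ) ≤ (k:ℝ) := by exact_mod_cast hk.1
          rw [div_le_one (by linarith)]; linarith
      _ = (N:ℝ) := by simp
  have hD0 : (0:ℝ) ≤ ∑ k ∈ Icc 1 N, (1:ℝ)/(k * 2^k) := by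
    apply Finset.sum_nonneg; intro k hk
    rw [Finset.mem_Icc] at hk
    have : (0:ℝ) < (k:ℝ) := by exact_mod_cast hk.1
    positivity
  have hD1 : (∑ k ∈ Icc 1 N, (1:ℝ)/(k * 2^k)) ≤ 1 := by
    calc (∑ k ∈ Icc 1 N, (1:ℝ)/(k * 2^k)) ≤ ∑ k ∈ Icc 1 N, ((1:ℝ)/2)^k := by
          apply Finset.sum_le_sum; intro k hk
          rw [Finset.mem_Icc] at hk
          have hk1 : (1:ℝ) ≤ (k:ℝ) := by exact_mod_cast hk.1
          have h2k : (0:ℝ) < (2:ℝ)^k := by positivity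
          rw [div_pow, one_pow]
          apply one_div_le_one_div_of_le h2k
          nlinarith
      _ = 1 - (1/2)^N := geom_aux N
      _ ≤ 1 := by
          have := pow_pos (show (0:ℝ) < 1/2 by norm_num) N; linarith
  have hE0 : (0:ℝ) ≤ ∑ k ∈ Icc 1 N, (1:ℝ)/(2 * k * 2^k) := by
    apply Finset.sum_nonneg; intro k hk
    rw [Finset.mem_Icc] at hk
    have : (0:ℝ) < (k:ℝ) := by exact_mod_cast hk.1
    positivity
  have hE1 : (∑ k ∈ Icc 1 N, (1:ℝ)/(2 * k * 2^k)) ≤ 1 := by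
    calc (∑ k ∈ Icc 1 N, (1:ℝ)/(2 * k * 2^k)) ≤ ∑ k ∈ Icc 1 N, ((1:ℝ)/2)^k := by
          apply Finset.sum_le_sum; intro k hk
          rw [Finset.mem_Icc] at hk
          have hk1 : (1:ℝ) ≤ (k:ℝ) := by exact_mod_cast hk.1
          have h2k : (0:ℝ) < (2:ℝ)^k := by positivity
          rw [div_pow, one_pow]
          apply one_div_le_one_div_of_le h2k
          nlinarith
      _ = 1 - (1/2)^N := geom_aux N
      _ ≤ 1 := by
          have := pow_pos (show (0:ℝ) < 1/2 by norm_num) N; linarith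
  -- RHS ≤ Γ * N^p
  have hF0 : (0:ℝ) ≤ (∑ k ∈ Icc 1 N, (1:ℝ)/k) / (2 - ∑ k ∈ Icc 1 N, (1:ℝ)/(k * 2^k)) :=
    div_nonneg hH0 (by linarith)
  have hFN : (∑ k ∈ Icc 1 N, (1:ℝ)/k) / (2 - ∑ k ∈ Icc 1 N, (1:ℝ)/(k * 2^k)) ≤ (N:ℝ) :=
    le_trans (div_le_self hH0 (by linarith)) hHN
  have hFp : ((∑ k ∈ Icc 1 N, (1:ℝ)/k) / (2 - ∑ k ∈ Icc 1 N, (1:ℝ)/(k * 2^k))) ^ p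
      ≤ (N:ℝ) ^ p := Real.rpow_le_rpow hF0 hFN (by linarith)
  have hEs : (1 - ∑ k ∈ Icc 1 N, (1:ℝ)/(2 * k * 2^k)) ^ s ≤ 1 :=
    Real.rpow_le_one (by linarith) (by linarith) (by linarith)
  have hRHS : Γ * ((∑ k ∈ Icc 1 N, (1:ℝ)/k) /
        (2 - ∑ k ∈ Icc 1 N, (1:ℝ)/(k * 2^k))) ^ p *
        (1 - ∑ k ∈ Icc 1 N, (1:ℝ)/(2 * k * 2^k)) ^ s ≤ Γ * (N:ℝ) ^ p := by
    have h5 : Γ * ((∑ k ∈ Icc 1 N, (1:ℝ)/k) /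
        (2 - ∑ k ∈ Icc 1 N, (1:ℝ)/(k * 2^k))) ^ p ≤ Γ * (N:ℝ) ^ p :=
      mul_le_mul_of_nonneg_left hFp hΓ.le
    calc Γ * ((∑ k ∈ Icc 1 N, (1:ℝ)/k) /
          (2 - ∑ k ∈ Icc 1 N, (1:ℝ)/(k * 2^k))) ^ p *
          (1 - ∑ k ∈ Icc 1 N, (1:ℝ)/(2 * k * 2^k)) ^ s
        ≤ Γ * (N:ℝ) ^ p * 1 := by
          apply mul_le_mul h5 hEs (Real.rpow_nonneg (by linarith) s)
          positivity
      _ = Γ * (N:ℝ) ^ p := by ring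
  -- LHS ≥ 2^(Nε)/(2N)
  have hterm : (1 / (2 * (N:ℝ) * 2 ^ N)) * (2:ℝ) ^ ((N:ℝ) * (p - s))
      = (2:ℝ) ^ ((N:ℝ) * ε) / (2 * (N:ℝ)) := by
    have : (2:ℝ) ^ ((N:ℝ) * (p - s)) = (2:ℝ) ^ ((N:ℝ) * ε) * (2:ℝ) ^ N := by
      rw [← Real.rpow_natCast (2:ℝ) N, ← Real.rpow_add (by norm_num : (0:ℝ) < 2)]
      congr 1; simp [hεdef]; ring
    rw [this]
    have h2N : (0:ℝ) < (2:ℝ)^N := by positivity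
    field_simp
  have hLHS : (2:ℝ) ^ ((N:ℝ) * ε) / (2 * (N:ℝ))
      ≤ ∑ k ∈ Icc 1 N, (1 / (2 * (k:ℝ) * 2 ^ k)) * (2:ℝ) ^ ((k:ℝ) * (p - s)) := by
    rw [← hterm]
    refine Finset.single_le_sum
      (f := fun k : ℕ => (1 / (2 * (k:ℝ) * 2 ^ k)) * (2:ℝ) ^ ((k:ℝ) * (p - s)))
      (fun k hk => ?_) hNmem
    rw [Finset.mem_Icc] at hk
    have : (0:ℝ) < (k:ℝ) := by exact_mod_cast hk.1
    positivity
  -- middle inequality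
  have hmid : Γ * (N:ℝ) ^ p < (2:ℝ) ^ ((N:ℝ) * ε) / (2 * (N:ℝ)) := by
    rw [lt_div_iff₀ (by linarith)]
    have hNp1 : (N:ℝ) ^ (p+1) = (N:ℝ) ^ p * (N:ℝ) := by
      rw [Real.rpow_add hN0, Real.rpow_one]
    nlinarith [hkey2, Real.rpow_pos_of_pos hN0 p]
  calc Γ * ((∑ k ∈ Icc 1 N, (1:ℝ)/k) /
        (2 - ∑ k ∈ Icc 1 N, (1:ℝ)/(k * 2^k))) ^ p *
        (1 - ∑ k ∈ Icc 1 N, (1:ℝ)/(2 * k * 2^k)) ^ s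
      ≤ Γ * (N:ℝ) ^ p := hRHS
    _ < (2:ℝ) ^ ((N:ℝ) * ε) / (2 * (N:ℝ)) := hmid
    _ ≤ _ := hLHS
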